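/- Let p be a prime and let n ≥ 1 be an integer, so that 2n+1 > 1 is odd. Suppose that C(2n+1, j+1) ≡ n · C(2n+1, j) (mod p) for all integers j with 0 < j < n−1. Then 2n+1 equals 3, 5, or 7, or there is a power q = p^m of p such that 2n+1 = q, or 2n+1 = 2q−1, or 2n+1 = 2q+1. -/

import Mathlib

open Nat

private lemma lucas_digit {p : ℕ} (hp : p.Prime) (i N : ℕ) :
    ((N.choose (p ^ i) : ℕ) : ZMod p) = ((N / p ^ i % p : ℕ) : ZMod p) := by
  haveI : Fact p.Prime := ⟨hp⟩
  induction i generalizing N with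
  | zero => simp [ZMod.natCast_mod]
  | succ i ih =>
    have h1 : ((N.choose (p ^ (i+1)) : ℕ) : ZMod p) =
        (((N % p).choose (p ^ (i+1) % p) * ((N / p).choose (p ^ (i+1) / p)) : ℕ) : ZMod p) :=
      (ZMod.natCast_eq_natCast_iff _ _ _).mpr Choose.choose_modEq_choose_mod_mul_choose_div_nat
    have h2 : p ^ (i+1) % p = 0 := by
      rw [pow_succ]; exact Nat.mul_mod_left _ _
    have h3 : p ^ (i+1) / p = p ^ i := by
      rw [pow_succ]; exact Nat.mul_div_cancel _ hp.pos
    rw [h2, h3, Nat.choose_zero_right, one_mul] at h1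
    rw [h1, ih (N / p), Nat.div_div_eq_div_mul, ← pow_succ']

theorem first_chain_lemma (p : ℕ) (hp : p.Prime) (n : ℕ) (hn : 1 ≤ n)
    (h : ∀ j : ℕ, 0 < j → j < n - 1 →
      (((2 * n + 1).choose (j + 1) : ZMod p) = n * ((2 * n + 1).choose j : ZMod p))) :
    2 * n + 1 = 3 ∨ 2 * n + 1 = 5 ∨ 2 * n + 1 = 7 ∨
      ∃ m : ℕ, 2 * n + 1 = p ^ m ∨ 2 * n + 1 = 2 * p ^ m - 1 ∨ 2 * n + 1 = 2 * p ^ m + 1 := by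
  haveI : Fact p.Prime := ⟨hp⟩
  rcases lt_or_ge n 4 with h4 | h4
  · interval_cases n <;> norm_num
  have hp2 := hp.two_le
  -- the chain of congruences
  have K : ∀ j : ℕ, 1 ≤ j → j ≤ n - 1 →
      (((2 * n + 1).choose j : ℕ) : ZMod p) = ((2 * n + 1 : ℕ) : ZMod p) * (n : ZMod p) ^ (j - 1) := by
    intro j hj1 hj2
    induction j with
    | zero => omega
    | succ j ih =>
      rcases Nat.lt_or_ge j 1 with hj | hj
      · interval_cases j
        simp
      · have hh := h j (by omega) (by omega)
        rw [hh, ih hj (by omega)]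
        rw [show j + 1 - 1 = (j - 1) + 1 by omega, pow_succ]
        ring
  -- trichotomy : p divides 2n+1, n, or n+1
  have K2 : (((2 * n + 1).choose 2 : ℕ) : ZMod p)
      = ((2 * n + 1 : ℕ) : ZMod p) * (n : ZMod p) := by
    have := K 2 (by omega) (by omega); simpa using this
  have hE : (2 * n + 1).choose 3 * 3 = (2 * n + 1).choose 2 * (2 * n - 1) := by
    have := Nat.choose_succ_right_eq (2 * n + 1) 2
    rwa [show 2 * n + 1 - 2 = 2 * n - 1 by omega] at this
  have hEz : (((2 * n + 1).choose 3 : ℕ) : ZMod p) * 3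
      = (((2 * n + 1).choose 2 : ℕ) : ZMod p) * (2 * (n : ZMod p) - 1) := by
    have := congrArg (fun x : ℕ => (x : ZMod p)) hE
    push_cast [Nat.cast_sub (show 1 ≤ 2 * n by omega)] at this
    convert this using 2
  have h2 := h 2 (by omega) (by omega)
  rw [h2, K2] at hEz
  have key : ((2 * n + 1 : ℕ) : ZMod p) * (n : ZMod p) * ((n : ZMod p) + 1) = 0 := by
    linear_combination hEz
  -- set up the base-p digit machinery
  set L := Nat.log p (n - 1) with hL
  have hL1 : p ^ L ≤ n - 1 := Nat.pow_log_le_self p (by omega)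
  have hL2 : n - 1 < p ^ (L + 1) := Nat.lt_pow_succ_log_self hp.one_lt _
  have hq2 : 2 ≤ p ^ (L + 1) := le_trans hp2 (Nat.le_self_pow (by omega) p)
  rcases mul_eq_zero.mp key with key' | hC
  rcases mul_eq_zero.mp key' with hA | hB
  · -- Case A : p ∣ 2n+1, conclude 2n+1 = p^(L+1)
    have D : ∀ i : ℕ, i ≤ L + 1 → p ^ i ∣ 2 * n + 1 := by
      intro i
      induction i with
      | zero => intro _; simp
      | succ i ih =>
        intro hi
        obtain ⟨q, hqd⟩ := ih (by omega)
        have hpi : p ^ i ≤ n - 1 := le_trans (Nat.pow_le_pow_right hp.pos (by omega)) hL1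
        have hKi := K (p ^ i) (Nat.one_le_pow _ _ hp.pos) hpi
        rw [lucas_digit hp i, hA, zero_mul] at hKi
        have hdiv : (2 * n + 1) / p ^ i = q := by
          rw [hqd]; exact Nat.mul_div_cancel_left _ (pow_pos hp.pos _)
        rw [hdiv, ZMod.natCast_mod] at hKi
        obtain ⟨r, hr⟩ := (ZMod.natCast_eq_zero_iff _ _).mp hKi
        exact ⟨r, by rw [hqd, hr, pow_succ]; ring⟩
    obtain ⟨k, hk⟩ := D (L + 1) le_rfl
    have hk3 : k < 3 := by
      by_contra hc
      push_neg at hc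
      have h3 : p ^ (L + 1) * 3 ≤ p ^ (L + 1) * k := Nat.mul_le_mul_left _ hc
      omega
    interval_cases k
    · omega
    · exact Or.inr (Or.inr (Or.inr ⟨L + 1, Or.inl (by omega)⟩))
    · omega
  · -- Case B : p ∣ n, conclude 2n+1 = 2p^(L+1)+1
    have hpn : p ∣ n := (ZMod.natCast_eq_zero_iff _ _).mp hB
    have D : ∀ i : ℕ, i ≤ L + 1 → p ^ i ∣ 2 * n := by
      intro i
      induction i with
      | zero => intro _; simp
      | succ i ih =>
        intro hi
        rcases Nat.eq_zero_or_pos i with rfl | hipos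
        · simpa using Dvd.dvd.mul_left hpn 2
        obtain ⟨q, hqd⟩ := ih (by omega)
        have hpi : p ^ i ≤ n - 1 := le_trans (Nat.pow_le_pow_right hp.pos (by omega)) hL1
        have hKi := K (p ^ i) (Nat.one_le_pow _ _ hp.pos) hpi
        have hexp : p ^ i - 1 ≠ 0 := by
          have : 2 ≤ p ^ i := le_trans hp2 (Nat.le_self_pow (by omega) p)
          omega
        rw [lucas_digit hp i, hB, zero_pow hexp, mul_zero] at hKi
        have hdiv : (2 * n + 1) / p ^ i = q := by
          have hgt : 1 < p ^ i := lt_of_lt_of_le hp.one_lt (Nat.le_self_pow (by omega) p)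
          rw [hqd, Nat.mul_add_div (pow_pos hp.pos _), Nat.div_eq_of_lt hgt, add_zero]
        rw [hdiv, ZMod.natCast_mod] at hKi
        obtain ⟨r, hr⟩ := (ZMod.natCast_eq_zero_iff _ _).mp hKi
        exact ⟨r, by rw [hqd, hr, pow_succ]; ring⟩
    obtain ⟨k, hk⟩ := D (L + 1) le_rfl
    have hk3 : k < 3 := by
      by_contra hc
      push_neg at hc
      have h3 : p ^ (L + 1) * 3 ≤ p ^ (L + 1) * k := Nat.mul_le_mul_left _ hc
      omega
    interval_cases k
    · omega
    · -- 2n = p^(L+1) : impossible by parity / size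
      exfalso
      rcases hp.eq_two_or_odd' with rfl | hodd
      · rw [pow_succ] at hk
        omega
      · have := (hodd.pow (n := L + 1))
        obtain ⟨c, hc⟩ := this
        omega
    · exact Or.inr (Or.inr (Or.inr ⟨L + 1, Or.inr (Or.inr (by omega))⟩))
  · -- Case C : p ∣ n+1, conclude 2n+1 = 2p^(L+1) - 1
    have hn1 : (n : ZMod p) = -1 := by linear_combination hC
    have D : ∀ i : ℕ, i ≤ L + 1 → p ^ i ∣ 2 * n + 2 := by
      intro i
      induction i with
      | zero => intro _; simp
      | succ i ih =>
        intro hi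
        obtain ⟨q, hqd⟩ := ih (by omega)
        have hqpos : 1 ≤ q := by
          rcases Nat.eq_zero_or_pos q with rfl | hq
          · omega
          · exact hq
        have hpi : p ^ i ≤ n - 1 := le_trans (Nat.pow_le_pow_right hp.pos (by omega)) hL1
        have hKi := K (p ^ i) (Nat.one_le_pow _ _ hp.pos) hpi
        rw [lucas_digit hp i, hn1] at hKi
        have hN1 : ((2 * n + 1 : ℕ) : ZMod p) = -1 := by
          push_cast
          linear_combination 2 * hn1
        rw [hN1] at hKi
        have hdiv : (2 * n + 1) / p ^ i = q - 1 := by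
          have hppos : 0 < p ^ i := pow_pos hp.pos _
          have he : 2 * n + 1 = (p ^ i - 1) + p ^ i * (q - 1) := by
            have h1 : p ^ i * (q - 1) = p ^ i * q - p ^ i := by
              cases q with
              | zero => omega
              | succ q' => simp [Nat.mul_succ]
            omega
          rw [he, Nat.add_mul_div_left _ _ hppos, Nat.div_eq_of_lt (by omega), zero_add]
        rw [hdiv, ZMod.natCast_mod] at hKi
        have hq0 : ((q : ℕ) : ZMod p) = 0 := by
          have hcast : ((q - 1 : ℕ) : ZMod p) = (q : ZMod p) - 1 := by
            push_cast [Nat.cast_sub hqpos]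
            ring
          rw [hcast] at hKi
          have hpow : (-1 : ZMod p) ^ (p ^ i - 1) = 1 := by
            rcases hp.eq_two_or_odd' with rfl | hodd
            · have h21 : (-1 : ZMod 2) = 1 := rfl
              rw [h21, one_pow]
            · have hoi : Odd (p ^ i) := hodd.pow
              have hev : Even (p ^ i - 1) := Nat.Odd.sub_odd hoi odd_one
              exact hev.neg_one_pow
          rw [hpow, mul_one] at hKi
          linear_combination hKi
        obtain ⟨r, hr⟩ := (ZMod.natCast_eq_zero_iff _ _).mp hq0
        exact ⟨r, by rw [hqd, hr, pow_succ]; ring⟩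
    obtain ⟨k, hk⟩ := D (L + 1) le_rfl
    have hk3 : k < 3 := by
      by_contra hc
      push_neg at hc
      have h3 : p ^ (L + 1) * 3 ≤ p ^ (L + 1) * k := Nat.mul_le_mul_left _ hc
      omega
    interval_cases k
    · omega
    · exfalso
      rcases hp.eq_two_or_odd' with rfl | hodd
      · rw [pow_succ] at hk
        omega
      · obtain ⟨c, hc⟩ := hodd.pow (n := L + 1)
        omega
    · exact Or.inr (Or.inr (Or.inr ⟨L + 1, Or.inr (Or.inl (by omega))⟩))
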